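/- Let Γ ⊂ ℝ^m be an open symmetric convex cone with vertex at the origin containing the positive orthant Γ_m, and with Γ ≠ ℝ^m. Then Γ is contained in the half-space Γ_1 = {λ ∈ ℝ^m : ∑_{j=1}^m λ_j > 0}. -/

import Mathlib

/-- An open symmetric convex cone `Γ ⊊ ℝ^m` with vertex at the origin containing the
positive orthant `Γ_m` is contained in the half-space
`Γ_1 = {λ : ∑_j λ_j > 0}`. -/
theorem stmt_11 (m : ℕ) (hm : 1 ≤ m)
    (Γ : Set (Fin m → ℝ))
    (hopen : IsOpen Γ)
    (hcone : ∀ lam ∈ Γ, ∀ t : ℝ, 0 < t → t • lam ∈ Γ)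
    (hconvex : Convex ℝ Γ)
    (hsymm : ∀ σ : Equiv.Perm (Fin m), ∀ lam ∈ Γ, (lam ∘ σ) ∈ Γ)
    (hsub : {lam : Fin m → ℝ | ∀ j, 0 < lam j} ⊆ Γ)
    (hproper : Γ ≠ Set.univ) :
    Γ ⊆ {lam : Fin m → ℝ | 0 < ∑ j, lam j} := by
  haveI : NeZero m := ⟨by omega⟩
  haveI : Nonempty (Fin m) := ⟨⟨0, by omega⟩⟩
  intro lam hlam
  by_contra hs
  simp only [Set.mem_setOf_eq, not_lt] at hs
  set s : ℝ := ∑ j, lam j with hsdef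
  -- additivity of Γ
  have hadd : ∀ a ∈ Γ, ∀ b ∈ Γ, a + b ∈ Γ := by
    intro a ha b hb
    have h2 := hconvex ha hb (by norm_num : (0:ℝ) ≤ 1/2) (by norm_num : (0:ℝ) ≤ 1/2)
      (by norm_num)
    have := hcone _ h2 2 (by norm_num)
    convert this using 1
    rw [smul_add, smul_smul, smul_smul]
    norm_num
  -- average over cyclic shifts lies in Γ and is constant s/m
  have hμ : (fun _ : Fin m => s / m) ∈ Γ := by
    have hmem : ∀ k : Fin m, (lam ∘ (Equiv.addLeft k)) ∈ Γ := fun k =>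
      hsymm (Equiv.addLeft k) lam hlam
    have hsum := hconvex.sum_mem (t := (Finset.univ : Finset (Fin m)))
      (w := fun _ => (1 : ℝ) / m) (z := fun k => lam ∘ (Equiv.addLeft k))
      (fun _ _ => by positivity)
      (by
        rw [Finset.sum_const, Finset.card_univ, Fintype.card_fin]
        rw [nsmul_eq_mul, mul_one_div_cancel (Nat.cast_ne_zero.mpr (by omega))])
      (fun k _ => hmem k)
    convert hsum using 1
    funext j
    rw [Finset.sum_apply]
    have : ∀ k : Fin m, (((1:ℝ)/(m:ℝ)) • (lam ∘ (Equiv.addLeft k))) j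
        = (1/(m:ℝ)) * lam (k + j) := fun k => rfl
    simp only [this]
    rw [← Finset.mul_sum]
    have hre : ∑ k : Fin m, lam (k + j) = ∑ k : Fin m, lam k :=
      Fintype.sum_equiv (Equiv.addRight j) _ _ (fun k => rfl)
    rw [hre, ← hsdef]
    ring
  -- get a strictly negative constant vector in Γ
  obtain ⟨c, hc0, hcΓ⟩ : ∃ c : ℝ, c < 0 ∧ (fun _ : Fin m => c) ∈ Γ := by
    rcases Metric.isOpen_iff.mp hopen _ hμ with ⟨ε, hε, hball⟩
    refine ⟨s / m - ε / 2, ?_, ?_⟩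
    · have : s / m ≤ 0 := div_nonpos_of_nonpos_of_nonneg hs (by positivity)
      linarith
    · apply hball
      rw [Metric.mem_ball, dist_pi_lt_iff hε]
      intro i
      rw [Real.dist_eq]
      rw [show s / m - ε / 2 - s / m = -(ε/2) by ring, abs_neg,
        abs_of_nonneg (by positivity)]
      linarith
  -- Γ = univ, contradiction
  apply hproper
  ext x
  simp only [Set.mem_univ, iff_true]
  set t : ℝ := (Finset.univ.sup' Finset.univ_nonempty (fun j => |x j|)) + 1 with htdef
  have ht : ∀ j, |x j| < t := by
    intro j
    have := Finset.le_sup' (fun j => |x j|) (Finset.mem_univ j)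
    simp only [htdef]
    linarith
  have ht0 : 0 < t := lt_of_le_of_lt (abs_nonneg _) (ht ⟨0, by omega⟩)
  have h1 : (x + fun _ => t) ∈ Γ := by
    apply hsub
    intro j
    have := (abs_lt.mp (ht j)).1
    simp only [Pi.add_apply]
    linarith
  have h2 : (fun _ : Fin m => -t) ∈ Γ := by
    have := hcone _ hcΓ (t / (-c)) (div_pos ht0 (neg_pos.mpr hc0))
    convert this using 1
    funext j
    simp only [Pi.smul_apply, smul_eq_mul]
    rw [div_neg, neg_mul, div_mul_cancel₀ _ hc0.ne]
  have := hadd _ h1 _ h2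
  convert this using 1
  funext j
  simp
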